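/- For a Poisson random variable X with mean μ > 0, a positive integer k ≤ q, and V_{q-k+1} a Gamma(q-k+1, 1) random variable, the falling factorial moment of the truncated variable satisfies E[X_q(X_q-1)···(X_q-k+1)] = E[min(V_{q-k+1}^k, μ^k)]. -/

import Mathlib

open ProbabilityTheory

/-- The Poisson probability mass function with real mean parameter `μ`. -/
noncomputable def poissonPMF' (μ : ℝ) (n : ℕ) : ℝ := Real.exp (-μ) * μ ^ n / n.factorial

open MeasureTheory Real Set
open scoped ENNReal NNReal

lemma myHasDeriv (n : ℕ) (t : ℝ) :
    HasDerivAt (fun t : ℝ => -(Real.exp (-t) * ∑ m ∈ Finset.range (n+1),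
      ((n.factorial : ℝ) / m.factorial) * t ^ m)) (t ^ n * Real.exp (-t)) t := by
  have hS : HasDerivAt (fun t : ℝ => ∑ m ∈ Finset.range (n+1),
      ((n.factorial : ℝ) / m.factorial) * t ^ m)
      (∑ m ∈ Finset.range (n+1), ((n.factorial : ℝ) / m.factorial) * (m * t ^ (m-1))) t := by
    apply HasDerivAt.fun_sum
    intro m _
    exact (hasDerivAt_pow m t).const_mul _
  have hE : HasDerivAt (fun t : ℝ => Real.exp (-t)) (-Real.exp (-t)) t := by
    simpa using (hasDerivAt_neg t).exp
  have key := (hE.mul hS).neg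
  convert key using 1
  · rfl
  · rfl
  · rfl
  have hshift : (∑ m ∈ Finset.range (n+1), ((n.factorial : ℝ)/m.factorial) * (m * t^(m-1)))
      = ∑ i ∈ Finset.range n, ((n.factorial : ℝ)/i.factorial) * t^i := by
    rw [Finset.sum_range_succ']
    simp only [Nat.cast_zero, zero_mul, mul_zero, add_zero]
    apply Finset.sum_congr rfl
    intro i _
    have h1 : ((i+1).factorial : ℝ) = (i+1) * i.factorial := by
      exact_mod_cast Nat.factorial_succ i
    have h2 : (i.factorial : ℝ) ≠ 0 := Nat.cast_ne_zero.mpr (Nat.factorial_ne_zero i)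
    simp only [Nat.add_sub_cancel, h1]
    push_cast
    field_simp
  rw [hshift, Finset.sum_range_succ, div_self (Nat.cast_ne_zero.mpr (Nat.factorial_ne_zero n)), one_mul]
  ring

lemma myKeyInt (n : ℕ) (x : ℝ) :
    ∫ t in (0:ℝ)..x, t ^ n * Real.exp (-t) =
      (n.factorial : ℝ) - Real.exp (-x) * ∑ m ∈ Finset.range (n+1),
        ((n.factorial : ℝ) / m.factorial) * x ^ m := by
  have h := intervalIntegral.integral_eq_sub_of_hasDerivAt
    (f := fun t : ℝ => -(Real.exp (-t) * ∑ m ∈ Finset.range (n+1),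
      ((n.factorial : ℝ) / m.factorial) * t ^ m))
    (fun t _ => myHasDeriv n t)
    (Continuous.intervalIntegrable (by continuity) 0 x)
  rw [h]
  have h0 : (∑ m ∈ Finset.range (n+1), ((n.factorial : ℝ) / m.factorial) * (0:ℝ) ^ m)
      = (n.factorial : ℝ) := by
    rw [Finset.sum_eq_single 0]
    · simp
    · intro b _ hb
      simp [zero_pow hb]
    · simp
  simp only [neg_zero, Real.exp_zero, one_mul, h0]
  ring

lemma myIntegrable (n : ℕ) : IntegrableOn (fun t : ℝ => t ^ n * Real.exp (-t)) (Ioi 0) := by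
  have h := Real.GammaIntegral_convergent (s := (n:ℝ) + 1) (by positivity)
  refine h.congr_fun (fun x hx => ?_) measurableSet_Ioi
  beta_reduce
  rw [add_sub_cancel_right, Real.rpow_natCast]
  ring

lemma myTotal (n : ℕ) : ∫ t in Ioi (0:ℝ), t ^ n * Real.exp (-t) = (n.factorial : ℝ) := by
  rw [← Real.Gamma_nat_eq_factorial, Real.Gamma_eq_integral (by positivity : (0:ℝ) < n + 1)]
  refine setIntegral_congr_fun measurableSet_Ioi fun x hx => ?_
  rw [add_sub_cancel_right, Real.rpow_natCast]
  ring

lemma myTail (n : ℕ) {μ : ℝ} (hμ : 0 < μ) :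
    ∫ t in Ioi μ, t ^ n * Real.exp (-t) =
      Real.exp (-μ) * ∑ m ∈ Finset.range (n+1), ((n.factorial : ℝ) / m.factorial) * μ ^ m := by
  have hsplit : (∫ t in Ioc 0 μ, t ^ n * Real.exp (-t)) + ∫ t in Ioi μ, t ^ n * Real.exp (-t)
      = ∫ t in Ioi (0:ℝ), t ^ n * Real.exp (-t) := by
    rw [← setIntegral_union (Ioc_disjoint_Ioi le_rfl) measurableSet_Ioi
      ((myIntegrable n).mono_set Ioc_subset_Ioi_self) ((myIntegrable n).mono_set
        (Ioi_subset_Ioi hμ.le)), Ioc_union_Ioi_eq_Ioi hμ.le]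
  have hIoc : (∫ t in Ioc 0 μ, t ^ n * Real.exp (-t)) = ∫ t in (0:ℝ)..μ, t ^ n * Real.exp (-t) :=
    (intervalIntegral.integral_of_le hμ.le).symm
  rw [myTotal n] at hsplit
  rw [hIoc, myKeyInt] at hsplit
  linarith

lemma myGammaInt (a : ℝ) (ha : 0 < a) (g : ℝ → ℝ) :
    ∫ v, g v ∂(gammaMeasure a 1) = ∫ v, gammaPDFReal a 1 v * g v := by
  rw [gammaMeasure]
  have h1 : (gammaPDF a 1) = fun x => ((gammaPDFReal a 1 x).toNNReal : ℝ≥0∞) := rfl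
  rw [h1, integral_withDensity_eq_integral_smul ((measurable_gammaPDFReal a 1).real_toNNReal)]
  congr 1; funext x
  rw [NNReal.smul_def, Real.coe_toNNReal _ (gammaPDFReal_nonneg ha one_pos x), smul_eq_mul]

lemma myRHS (μ : ℝ) (hμ : 0 < μ) (q k n : ℕ) (hn : n + k = q) :
    ∫ v, min (v ^ k) (μ ^ k) ∂(gammaMeasure ((q : ℝ) - k + 1) 1) =
      (1/(n.factorial:ℝ)) * ((q.factorial:ℝ) -
        Real.exp (-μ) * ∑ m ∈ Finset.range (q+1), ((q.factorial : ℝ) / m.factorial) * μ ^ m)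
      + (μ^k/(n.factorial:ℝ)) *
        (Real.exp (-μ) * ∑ m ∈ Finset.range (n+1), ((n.factorial : ℝ) / m.factorial) * μ ^ m) := by
  have ha : (q : ℝ) - k + 1 = (n : ℝ) + 1 := by
    have : (q:ℝ) = (n:ℝ) + (k:ℝ) := by exact_mod_cast congrArg (Nat.cast : ℕ → ℝ) hn.symm
    rw [this]; ring
  have ha0 : (0:ℝ) < (q : ℝ) - k + 1 := by rw [ha]; positivity
  rw [myGammaInt _ ha0]
  -- restrict to Ici 0 then Ioi 0
  rw [← setIntegral_eq_integral_of_forall_compl_eq_zero (s := Ici (0:ℝ))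
    (fun x hx => by
      rw [gammaPDFReal, if_neg (by simpa using hx)]; ring),
    integral_Ici_eq_integral_Ioi]
  have hpdf : ∀ x ∈ Ioi (0:ℝ), gammaPDFReal ((q : ℝ) - k + 1) 1 x * min (x ^ k) (μ ^ k)
      = (x ^ n * Real.exp (-x) / n.factorial) * min (x ^ k) (μ ^ k) := by
    intro x hx
    rw [gammaPDFReal, if_pos (le_of_lt hx), ha]
    rw [Real.one_rpow, add_sub_cancel_right, Real.rpow_natCast, Real.Gamma_nat_eq_factorial]
    ring_nf
  rw [setIntegral_congr_fun measurableSet_Ioi hpdf]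
  set h : ℝ → ℝ := fun x => (x ^ n * Real.exp (-x) / n.factorial) * min (x ^ k) (μ ^ k) with hh
  have hfac : (n.factorial : ℝ) ≠ 0 := Nat.cast_ne_zero.mpr (Nat.factorial_ne_zero n)
  have hIoc_eq : ∀ x ∈ Ioc (0:ℝ) μ, h x = (1/(n.factorial:ℝ)) * (x ^ q * Real.exp (-x)) := by
    intro x hx
    have : min (x ^ k) (μ ^ k) = x ^ k := min_eq_left (pow_le_pow_left₀ hx.1.le hx.2 k)
    rw [hh]; dsimp only; rw [this, ← hn, pow_add]; ring
  have hIoi_eq : ∀ x ∈ Ioi μ, h x = (μ^k/(n.factorial:ℝ)) * (x ^ n * Real.exp (-x)) := by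
    intro x hx
    have : min (x ^ k) (μ ^ k) = μ ^ k := min_eq_right (pow_le_pow_left₀ hμ.le (le_of_lt hx) k)
    rw [hh]; dsimp only; rw [this]; ring
  have hint1 : IntegrableOn h (Ioc 0 μ) :=
    Integrable.congr (((myIntegrable q).mono_set Ioc_subset_Ioi_self).const_mul (1/(n.factorial:ℝ)))
      ((ae_restrict_iff' measurableSet_Ioc).mpr (ae_of_all _ fun x hx => (hIoc_eq x hx).symm))
  have hint2 : IntegrableOn h (Ioi μ) :=
    Integrable.congr (((myIntegrable n).mono_set (Ioi_subset_Ioi hμ.le)).const_mul (μ^k/(n.factorial:ℝ)))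
      ((ae_restrict_iff' measurableSet_Ioi).mpr (ae_of_all _ fun x hx => (hIoi_eq x hx).symm))
  have hsplit : (∫ x in Ioi (0:ℝ), h x) = (∫ x in Ioc 0 μ, h x) + ∫ x in Ioi μ, h x := by
    rw [← setIntegral_union (Ioc_disjoint_Ioi le_rfl) measurableSet_Ioi hint1 hint2,
      Ioc_union_Ioi_eq_Ioi hμ.le]
  rw [hsplit]
  have e1 : (∫ x in Ioc 0 μ, h x) = (1/(n.factorial:ℝ)) * ((q.factorial:ℝ) -
      Real.exp (-μ) * ∑ m ∈ Finset.range (q+1), ((q.factorial : ℝ) / m.factorial) * μ ^ m) := by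
    rw [setIntegral_congr_fun measurableSet_Ioc hIoc_eq, integral_const_mul,
      ← intervalIntegral.integral_of_le hμ.le, myKeyInt]
  have e2 : (∫ x in Ioi μ, h x) = (μ^k/(n.factorial:ℝ)) *
      (Real.exp (-μ) * ∑ m ∈ Finset.range (n+1), ((n.factorial : ℝ) / m.factorial) * μ ^ m) := by
    rw [setIntegral_congr_fun measurableSet_Ioi hIoi_eq, integral_const_mul, myTail n hμ]
  rw [e1, e2]

lemma myLHS (μ : ℝ) (hμ : 0 < μ) (q k : ℕ) :
    (∑' n : ℕ, poissonPMF' μ n * ((min n q).descFactorial k : ℝ)) =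
      (∑ j ∈ Finset.range (q+1), poissonPMF' μ j * (j.descFactorial k : ℝ))
      + (q.descFactorial k : ℝ) * (1 - ∑ m ∈ Finset.range (q+1), poissonPMF' μ m) := by
  have hsum : Summable (poissonPMF' μ) :=
    ((Real.summable_pow_div_factorial μ).mul_left (Real.exp (-μ))).congr
      (fun m => by unfold poissonPMF'; ring)
  have htot : ∑' m, poissonPMF' μ m = 1 := by
    have h := ProbabilityTheory.poissonPMFRealSum μ.toNNReal
    have he : ProbabilityTheory.poissonPMFReal μ.toNNReal = poissonPMF' μ := by
      funext m
      simp [ProbabilityTheory.poissonPMFReal, poissonPMF', Real.coe_toNNReal _ hμ.le]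
    rw [← he]
    exact h.tsum_eq
  have hfsum : Summable (fun m => poissonPMF' μ m * ((min m q).descFactorial k : ℝ)) := by
    refine Summable.of_nonneg_of_le (fun m => by unfold poissonPMF'; positivity)
      (fun m => ?_) (hsum.mul_right (q.descFactorial k : ℝ))
    refine mul_le_mul_of_nonneg_left ?_ (by unfold poissonPMF'; positivity)
    exact_mod_cast Nat.descFactorial_le k (min_le_right m q)
  rw [← hfsum.sum_add_tsum_nat_add (q+1)]
  congr 1
  · apply Finset.sum_congr rfl
    intro j hj
    have hj' : j ≤ q := by have := Finset.mem_range.mp hj; omega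
    rw [min_eq_left hj']
  · have h1 : ∀ i : ℕ, poissonPMF' μ (i + (q+1)) * ((min (i + (q+1)) q).descFactorial k : ℝ)
        = poissonPMF' μ (i + (q+1)) * (q.descFactorial k : ℝ) := by
      intro i
      rw [min_eq_right (by omega : q ≤ i + (q+1))]
    rw [tsum_congr h1, tsum_mul_right]
    have h2 := hsum.sum_add_tsum_nat_add (q+1)
    rw [htot] at h2
    have h3 : ∑' i, poissonPMF' μ (i + (q+1)) = 1 - ∑ m ∈ Finset.range (q+1), poissonPMF' μ m := by
      linarith
    rw [h3, mul_comm]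

/-- For `X ~ Poisson(μ)` with `μ > 0`, positive integers `k ≤ q`, and
`V_{q-k+1} ~ Gamma(q-k+1, 1)`, the `k`-th falling factorial moment of `X_q = min(X,q)`
satisfies `E[X_q (X_q - 1) ⋯ (X_q - k + 1)] = E[min(V_{q-k+1}^k, μ^k)]`. -/
theorem stmt2 (μ : ℝ) (hμ : 0 < μ) (q k : ℕ) (hk : 1 ≤ k) (hkq : k ≤ q) :
    (∑' n : ℕ, poissonPMF' μ n * ((min n q).descFactorial k : ℝ)) =
      ∫ v, min (v ^ k) (μ ^ k) ∂(gammaMeasure ((q : ℝ) - k + 1) 1) := by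
  have hn : (q - k) + k = q := by omega
  set N := q - k with hN
  rw [myRHS μ hμ q k N hn, myLHS μ hμ q k]
  have hfacN : (N.factorial : ℝ) ≠ 0 := Nat.cast_ne_zero.mpr (Nat.factorial_ne_zero N)
  have hD : ((q.descFactorial k : ℕ) : ℝ) = (q.factorial : ℝ) / N.factorial := by
    have h := Nat.factorial_mul_descFactorial hkq
    have h' : (N.factorial : ℝ) * (q.descFactorial k : ℝ) = q.factorial := by
      rw [hN]; exact_mod_cast h
    rw [eq_div_iff hfacN]; linarith
  have hA : (∑ j ∈ Finset.range (q+1), poissonPMF' μ j * (j.descFactorial k : ℝ))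
      = (μ^k/(N.factorial:ℝ)) * (Real.exp (-μ) *
          ∑ m ∈ Finset.range (N+1), ((N.factorial : ℝ) / m.factorial) * μ ^ m) := by
    rw [Finset.range_eq_Ico, ← Finset.sum_Ico_consecutive _ (Nat.zero_le k) (by omega : k ≤ q+1)]
    have hz : (∑ j ∈ Finset.Ico 0 k, poissonPMF' μ j * (j.descFactorial k : ℝ)) = 0 := by
      apply Finset.sum_eq_zero; intro j hj
      have hjk : j < k := (Finset.mem_Ico.mp hj).2
      rw [Nat.descFactorial_of_lt hjk]; simp
    rw [hz, zero_add, Finset.sum_Ico_eq_sum_range]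
    have hk1 : q + 1 - k = N + 1 := by omega
    rw [hk1]
    simp only [Finset.mul_sum]
    apply Finset.sum_congr rfl
    intro m _
    have hfm : (m.factorial : ℝ) ≠ 0 := Nat.cast_ne_zero.mpr (Nat.factorial_ne_zero m)
    have hfkm : ((k+m).factorial : ℝ) ≠ 0 := Nat.cast_ne_zero.mpr (Nat.factorial_ne_zero _)
    have hdesc : (((k+m).descFactorial k : ℕ) : ℝ) = ((k+m).factorial : ℝ) / m.factorial := by
      have h := Nat.factorial_mul_descFactorial (Nat.le_add_right k m)
      have h2 : k + m - k = m := by omega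
      rw [h2] at h
      have h' : (m.factorial : ℝ) * ((k+m).descFactorial k : ℝ) = (k+m).factorial := by
        exact_mod_cast h
      rw [eq_div_iff hfm]; linarith
    unfold poissonPMF'
    rw [hdesc, pow_add]
    field_simp
  have hS : ((q.descFactorial k : ℕ):ℝ) * (∑ m ∈ Finset.range (q+1), poissonPMF' μ m)
      = (1/(N.factorial:ℝ)) * (Real.exp (-μ) *
          ∑ m ∈ Finset.range (q+1), ((q.factorial:ℝ)/m.factorial) * μ^m) := by
    rw [hD]
    simp only [Finset.mul_sum]
    apply Finset.sum_congr rfl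
    intro m _
    have hfm : (m.factorial : ℝ) ≠ 0 := Nat.cast_ne_zero.mpr (Nat.factorial_ne_zero m)
    unfold poissonPMF'
    field_simp
  rw [hA]
  have hfin : ((q.descFactorial k : ℕ):ℝ) * (1 - ∑ m ∈ Finset.range (q+1), poissonPMF' μ m)
      = (1/(N.factorial:ℝ)) * ((q.factorial:ℝ) - Real.exp (-μ) *
          ∑ m ∈ Finset.range (q+1), ((q.factorial:ℝ)/m.factorial) * μ^m) := by
    rw [mul_one_sub, hS, hD]
    ring
  rw [hfin]
  ring
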